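/- Let f be an unbounded modulus function and let I be an ideal on ℕ which is an Erdős–Ulam ideal and is increasing-invariant. Then Z(f) ⊆ I. -/

import Mathlib

open Filter Topology

/-- `cnt C k` is the number of elements of `C` in `[0, k-1]`. -/
noncomputable def cnt (C : Set ℕ) (k : ℕ) : ℕ := (C ∩ Set.Iio k).ncard

/-- A modulus function `f : [0,∞) → [0,∞)`: nonnegative, increasing, subadditive,
vanishing exactly at `0`, and right continuous at `0`. -/
def IsModulus (f : ℝ → ℝ) : Prop :=
  (∀ x, 0 ≤ x → 0 ≤ f x) ∧ MonotoneOn f (Set.Ici 0) ∧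
  (∀ x y, 0 ≤ x → 0 ≤ y → f (x + y) ≤ f x + f y) ∧
  (∀ x, 0 ≤ x → (f x = 0 ↔ x = 0)) ∧ ContinuousWithinAt f (Set.Ici 0) 0

/-- `f` is unbounded on `[0,∞)`. -/
def IsUnboundedMod (f : ℝ → ℝ) : Prop := ∀ M : ℝ, ∃ x : ℝ, 0 ≤ x ∧ M < f x

/-- `I` is an ideal on `ℕ`. -/
def IsIdeal (I : Set (Set ℕ)) : Prop :=
  I.Nonempty ∧ (∀ A B : Set ℕ, A ∈ I → B ∈ I → A ∪ B ∈ I) ∧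
  (∀ A B : Set ℕ, A ∈ I → B ⊆ A → B ∈ I) ∧ Set.univ ∉ I

/-- `I` is an Erdős–Ulam ideal. -/
def IsEU (I : Set (Set ℕ)) : Prop :=
  ∃ h : ℕ → ℝ, (∀ i, 0 ≤ h i) ∧
    Tendsto (fun k => ∑ i ∈ Finset.range k, h i) atTop atTop ∧
    Tendsto (fun k => h k / ∑ i ∈ Finset.range (k + 1), h i) atTop (nhds 0) ∧
    I = {C : Set ℕ |
      Tendsto (fun k => (∑ i ∈ Finset.range k, C.indicator h i) / ∑ i ∈ Finset.range k, h i)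
        atTop (nhds 0)}

/-- `I` is increasing-invariant. -/
def IncreasingInvariant (I : Set (Set ℕ)) : Prop :=
  ∀ C ∈ I, ∀ B : Set ℕ, (∀ k : ℕ, cnt B k ≤ cnt C k) → B ∈ I


lemma cnt_finite (C : Set ℕ) (k : ℕ) : (C ∩ Set.Iio k).Finite :=
  (Set.finite_Iio k).subset Set.inter_subset_right

lemma ncard_Iio (k : ℕ) : (Set.Iio k).ncard = k := by
  rw [← Finset.coe_range, Set.ncard_coe_finset, Finset.card_range]

lemma cnt_le (C : Set ℕ) (k : ℕ) : cnt C k ≤ k := by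
  have := Set.ncard_le_ncard (Set.inter_subset_right (s := C) (t := Set.Iio k)) (Set.finite_Iio k)
  simpa [cnt, ncard_Iio] using this

lemma cnt_mono (C : Set ℕ) {k l : ℕ} (hkl : k ≤ l) : cnt C k ≤ cnt C l :=
  Set.ncard_le_ncard (Set.inter_subset_inter_right _ (Set.Iio_subset_Iio hkl)) (cnt_finite C l)

lemma cnt_Iio_le {K k : ℕ} (h : k ≤ K) : cnt (Set.Iio K) k = k := by
  have : Set.Iio K ∩ Set.Iio k = Set.Iio k := by
    ext i; simp only [Set.mem_inter_iff, Set.mem_Iio]; omega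
  rw [cnt, this, ncard_Iio]


lemma modulus_nsmul {f : ℝ → ℝ} (hf : IsModulus f) (n : ℕ) {x : ℝ} (hx : 0 ≤ x) :
    f (n * x) ≤ n * f x := by
  obtain ⟨h0, hmono, hsub, hiff, -⟩ := hf
  induction n with
  | zero => simp [(hiff 0 le_rfl).mpr rfl]
  | succ n ih =>
    have h1 : f ((n+1 : ℕ) * x) ≤ f (n * x) + f x := by
      have := hsub (n * x) x (by positivity) hx
      rw [show ((n+1 : ℕ) : ℝ) * x = n * x + x by push_cast; ring]
      exact this
    calc f ((n+1 : ℕ) * x) ≤ f (n * x) + f x := h1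
    _ ≤ n * f x + f x := by linarith
    _ = (n+1 : ℕ) * f x := by push_cast; ring

lemma modulus_pos {f : ℝ → ℝ} (hf : IsModulus f) {k : ℕ} (hk : 1 ≤ k) : 0 < f k := by
  obtain ⟨h0, hmono, hsub, hiff, -⟩ := hf
  have h1 : 0 < f 1 := by
    rcases lt_or_eq_of_le (h0 1 zero_le_one) with h | h
    · exact h
    · exact absurd ((hiff 1 zero_le_one).mp h.symm) one_ne_zero
  have : f 1 ≤ f k := hmono (by norm_num) (by simp) (by exact_mod_cast hk)
  linarith

lemma modulus_ratio {f : ℝ → ℝ} (hf : IsModulus f) {m k : ℕ} (hm : 1 ≤ m) (hmk : m ≤ k) :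
    (m : ℝ) / (2 * k) ≤ f m / f k := by
  have hfk : 0 < f k := modulus_pos hf (le_trans hm hmk)
  have hfm : 0 < f m := modulus_pos hf hm
  obtain ⟨h0, hmono, hsub, hiff, hcont⟩ := hf
  have hk1 : 1 ≤ k := le_trans hm hmk
  set q : ℕ := (k + m - 1) / m with hq
  have hmod := Nat.div_add_mod (k + m - 1) m
  have hrlt : (k + m - 1) % m < m := Nat.mod_lt _ (by omega)
  rw [← hq] at hmod
  have hkqm : k ≤ q * m := by rw [mul_comm]; omega
  have hqk2 : q * m ≤ 2 * k := by rw [mul_comm]; omega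
  have hfkq : f k ≤ q * f m := by
    have h1 : f k ≤ f ((q * m : ℕ) : ℝ) := by
      apply hmono (by simp) (by simp only [Set.mem_Ici]; positivity)
      exact_mod_cast hkqm
    have h2 : f ((q : ℝ) * m) ≤ q * f m :=
      modulus_nsmul ⟨h0, hmono, hsub, hiff, hcont⟩ q (by positivity)
    calc f k ≤ f ((q * m : ℕ) : ℝ) := h1
    _ = f ((q:ℝ) * m) := by push_cast; ring_nf
    _ ≤ q * f m := h2
  have hm0 : (0:ℝ) < m := by exact_mod_cast hm
  have hk0 : (0:ℝ) < k := by exact_mod_cast hk1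
  rw [div_le_div_iff₀ (by positivity) hfk]
  have hqm2k : (q:ℝ) * m ≤ 2 * k := by exact_mod_cast hqk2
  have hq0 : (0:ℝ) < q := by
    have : 1 ≤ q := by by_contra h; push_neg at h; interval_cases q <;> omega
    exact_mod_cast this
  calc (m:ℝ) * f k ≤ m * (q * f m) := by nlinarith
  _ ≤ f m * (2 * k) := by nlinarith

lemma density_of_modulus {f : ℝ → ℝ} (hf : IsModulus f) (B : Set ℕ)
    (hB : Tendsto (fun k => f (cnt B k) / f (k : ℝ)) atTop (nhds 0)) :
    ∀ ε : ℝ, 0 < ε → ∃ N, ∀ k ≥ N, (cnt B k : ℝ) ≤ ε * k := by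
  intro ε hε
  have h2 : (0:ℝ) < ε / 2 := by linarith
  obtain ⟨N, hN⟩ := (Metric.tendsto_atTop.mp hB) (ε/2) h2
  refine ⟨max N 1, fun k hk => ?_⟩
  have hk1 : 1 ≤ k := le_trans (le_max_right _ _) hk
  have hkN : N ≤ k := le_trans (le_max_left _ _) hk
  by_contra hcon
  push_neg at hcon
  have hm1 : 1 ≤ cnt B k := by
    by_contra h
    push_neg at h
    have h0 : cnt B k = 0 := by omega
    rw [h0] at hcon
    simp only [Nat.cast_zero] at hcon
    have : (0:ℝ) < ε * k := by positivity
    linarith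
  have hratio := modulus_ratio hf hm1 (cnt_le B k)
  have hdist := hN k hkN
  rw [Real.dist_eq, sub_zero] at hdist
  have habs : f (cnt B k) / f k < ε / 2 := lt_of_abs_lt hdist
  have hk0 : (0:ℝ) < k := by exact_mod_cast hk1
  have hlt : (cnt B k : ℝ) / (2 * k) < ε / 2 := lt_of_le_of_lt hratio habs
  rw [div_lt_iff₀ (by positivity)] at hlt
  linarith

noncomputable def Wseq (K : ℕ) (g : ℕ → ℕ) : ℕ → ℕ
  | 0 => K
  | j+1 => Wseq K g j + (2 ^ g (Wseq K g j) + 1)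

lemma Wseq_succ (K : ℕ) (g : ℕ → ℕ) (j : ℕ) :
    Wseq K g (j+1) = Wseq K g j + (2 ^ g (Wseq K g j) + 1) := rfl

lemma Wseq_strictMono (K : ℕ) (g : ℕ → ℕ) : StrictMono (Wseq K g) :=
  strictMono_nat_of_lt_succ fun j => by rw [Wseq_succ]; have : 0 < 2 ^ g (Wseq K g j) := Nat.pow_pos (by norm_num); omega

lemma Wseq_ge (K : ℕ) (g : ℕ → ℕ) (j : ℕ) : K ≤ Wseq K g j := by
  induction j with
  | zero => exact le_rfl
  | succ j ih => exact le_trans ih (Nat.le_add_right _ _)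

lemma Wseq_le_apply (K : ℕ) (g : ℕ → ℕ) (j : ℕ) : j ≤ Wseq K g j :=
  (Wseq_strictMono K g).le_apply

lemma Wseq_sum (K : ℕ) (g : ℕ → ℕ) (n : ℕ) :
    Wseq K g n = K + ∑ j ∈ Finset.range n, (2 ^ g (Wseq K g j) + 1) := by
  induction n with
  | zero => rfl
  | succ n ih => rw [Finset.sum_range_succ, Wseq_succ, ih]; ring

lemma core (h : ℕ → ℝ) (hpos : ∀ i, 0 ≤ h i)
    (hH : Tendsto (fun k => ∑ i ∈ Finset.range k, h i) atTop atTop)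
    (hδ : Tendsto (fun k => h k / ∑ i ∈ Finset.range (k + 1), h i) atTop (nhds 0))
    (B : Set ℕ) (hdens : ∀ ε : ℝ, 0 < ε → ∃ N, ∀ k ≥ N, (cnt B k : ℝ) ≤ ε * k) :
    ∃ C : Set ℕ, (∀ k, cnt B k ≤ cnt C k) ∧
      Tendsto (fun k => (∑ i ∈ Finset.range k, C.indicator h i) / ∑ i ∈ Finset.range k, h i)
        atTop (nhds 0) := by
  classical
  set H : ℕ → ℝ := fun k => ∑ i ∈ Finset.range k, h i with hHdef
  have hHmono : Monotone H := by
    intro a b hab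
    exact Finset.sum_le_sum_of_subset_of_nonneg (Finset.range_subset_range.mpr hab)
      (fun i _ _ => hpos i)
  have hHnn : ∀ k, 0 ≤ H k := fun k => Finset.sum_nonneg fun i _ => hpos i
  have h_le_H : ∀ i, h i ≤ H (i + 1) := by
    intro i
    exact Finset.single_le_sum (fun j _ => hpos j) (Finset.self_mem_range_succ i)
  -- density thresholds
  have hA : ∀ s : ℕ, ∃ N, ∀ k ≥ N, 4 * 2 ^ s * cnt B k ≤ k := by
    intro s
    obtain ⟨N, hN⟩ := hdens (1 / (4 * 2 ^ s)) (by positivity)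
    refine ⟨N, fun k hk => ?_⟩
    have := hN k hk
    have h2 : (0:ℝ) < 4 * 2 ^ s := by positivity
    have : ((4 * 2 ^ s * cnt B k : ℕ) : ℝ) ≤ (k : ℝ) := by
      push_cast
      rw [div_mul_eq_mul_div, le_div_iff₀ h2] at this
      calc (4:ℝ) * 2 ^ s * cnt B k = (cnt B k : ℝ) * (4 * 2 ^ s) := by ring
      _ ≤ 1 * k := this
      _ = k := by ring
    exact_mod_cast this
  choose A₀ hA₀ using hA
  -- delta thresholds
  have hEx : ∀ s : ℕ, ∃ N, ∀ i ≥ N, h i * 2 ^ s ≤ H (i + 1) := by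
    intro s
    obtain ⟨N, hN⟩ := (Metric.tendsto_atTop.mp hδ) ((2:ℝ)^s)⁻¹ (by positivity)
    refine ⟨N, fun i hi => ?_⟩
    have hd := hN i hi
    rw [Real.dist_eq, sub_zero] at hd
    rcases eq_or_lt_of_le (hHnn (i+1)) with hz | hz
    · have hle : h i ≤ H (i+1) := h_le_H i
      have h0 : h i = 0 := le_antisymm (by rw [← hz] at hle; exact hle) (hpos i)
      rw [h0, zero_mul]
      exact hHnn (i+1)
    · have habs : h i / H (i+1) < ((2:ℝ)^s)⁻¹ := lt_of_abs_lt hd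
      rw [div_lt_iff₀ hz] at habs
      have h2 : (0:ℝ) < 2 ^ s := by positivity
      calc h i * 2 ^ s ≤ (((2:ℝ)^s)⁻¹ * H (i+1)) * 2^s := by nlinarith
      _ = H (i+1) := by field_simp
  choose E hE using hEx
  -- combined monotone thresholds
  set A' : ℕ → ℕ := fun s => ∑ r ∈ Finset.range (s + 1), (A₀ r + E r + 1) with hA'def
  have hA'mono : Monotone A' := by
    intro a b hab
    exact Finset.sum_le_sum_of_subset (Finset.range_subset_range.mpr (by omega))
  have hA'A₀ : ∀ s, A₀ s ≤ A' s := fun s =>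
    le_trans (by show A₀ s ≤ A₀ s + E s + 1; omega)
      (Finset.single_le_sum (f := fun r => A₀ r + E r + 1)
      (fun i _ => Nat.zero_le _) (Finset.self_mem_range_succ s))
  have hA'E : ∀ s, E s ≤ A' s := fun s =>
    le_trans (by show E s ≤ A₀ s + E s + 1; omega)
      (Finset.single_le_sum (f := fun r => A₀ r + E r + 1)
      (fun i _ => Nat.zero_le _) (Finset.self_mem_range_succ s))
  have hA'ge : ∀ s, s + 1 ≤ A' s := by
    intro s
    calc s + 1 = ∑ r ∈ Finset.range (s+1), 1 := by simp
    _ ≤ A' s := Finset.sum_le_sum fun i _ => by omega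
  set φ : ℕ → ℕ := fun k => Nat.findGreatest (fun s => A' s ≤ k) k with hφdef
  have hφ_ge : ∀ s k, A' s ≤ k → s ≤ φ k := by
    intro s k hsk
    exact Nat.le_findGreatest (le_trans (by have := hA'ge s; omega) hsk) hsk
  have hφ_spec : ∀ k, 1 ≤ φ k → A' (φ k) ≤ k := by
    intro k h1
    by_cases hex : A' 1 ≤ k
    · exact Nat.findGreatest_spec (P := fun s => A' s ≤ k)
        (le_trans (by have := hA'ge 1; omega) hex) hex
    · exfalso
      have : φ k = 0 := by
        rw [hφdef]
        simp only
        rw [Nat.findGreatest_eq_zero_iff]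
        intro n hn hnk
        intro hcon
        exact hex (le_trans (hA'mono (by omega : 1 ≤ n)) hcon)
      omega
  have hφ_mono : Monotone φ := by
    intro a b hab
    by_cases h0 : φ a = 0
    · omega
    · have h1 : 1 ≤ φ a := by omega
      have := hφ_spec a h1
      exact Nat.le_findGreatest (le_trans (le_trans (by have := hA'ge (φ a); omega) this) hab)
        (le_trans this hab)
  -- the window sequence
  set K₀ : ℕ := A' 1 with hK₀def
  set W : ℕ → ℕ := Wseq K₀ φ with hWdef
  have hWmono : StrictMono W := Wseq_strictMono K₀ φ
  have hφW1 : ∀ j, 1 ≤ φ (W j) := by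
    intro j
    exact hφ_ge 1 (W j) (le_trans le_rfl (Wseq_ge K₀ φ j))
  -- the argmin sequence
  have hwin : ∀ j, ∃ m ∈ Finset.Ico (W j) (W (j+1)), ∀ i ∈ Finset.Ico (W j) (W (j+1)), h m ≤ h i := by
    intro j
    apply Finset.exists_min_image
    rw [Finset.nonempty_Ico]
    exact hWmono (by omega)
  choose c hcmem hcmin using hwin
  have hcW : ∀ j, W j ≤ c j ∧ c j < W (j+1) := by
    intro j
    have := hcmem j
    rw [Finset.mem_Ico] at this
    exact this
  set C : Set ℕ := Set.Iio (W 1) ∪ Set.range c with hCdef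
  have hcmono : StrictMono c := by
    intro i j hij
    calc c i < W (i+1) := (hcW i).2
    _ ≤ W j := hWmono.monotone (by omega)
    _ ≤ c j := (hcW j).1
  -- the key counting estimate
  have hstar : ∀ j, 1 ≤ j → cnt B (W (j+1)) ≤ W 1 + (j - 1) := by
    intro j hj
    set s := φ (W j) with hsdef
    have hs1 : 1 ≤ s := hφW1 j
    have hA's : A' s ≤ W j := hφ_spec (W j) hs1
    have hA₀s : A₀ s ≤ W (j+1) :=
      le_trans (hA'A₀ s) (le_trans hA's (le_of_lt (hWmono (lt_add_one j))))
    have hcnt : 4 * 2 ^ s * cnt B (W (j+1)) ≤ W (j+1) := hA₀ s _ hA₀s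
    have hbound : W (j+1) ≤ W 0 + (j+1) * (2 ^ s + 1) := by
      have hsum := Wseq_sum K₀ φ (j+1)
      have hterm : ∀ i ∈ Finset.range (j+1), 2 ^ φ (Wseq K₀ φ i) + 1 ≤ 2 ^ s + 1 := by
        intro i hi
        rw [Finset.mem_range] at hi
        have hφle : φ (Wseq K₀ φ i) ≤ s := hφ_mono (hWmono.monotone (by omega : i ≤ j))
        have := Nat.pow_le_pow_right (by norm_num : 1 ≤ 2) hφle
        omega
      calc W (j+1) = K₀ + ∑ i ∈ Finset.range (j+1), (2 ^ φ (Wseq K₀ φ i) + 1) := hsum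
      _ ≤ K₀ + (j+1) * (2 ^ s + 1) := by
          have := Finset.sum_le_card_nsmul (Finset.range (j+1))
            (fun i => 2 ^ φ (Wseq K₀ φ i) + 1) (2 ^ s + 1) hterm
          simp only [Finset.card_range, smul_eq_mul] at this
          omega
      _ = W 0 + (j+1) * (2 ^ s + 1) := rfl
    have h2s : 1 ≤ 2 ^ s := Nat.one_le_two_pow
    have hmul : 4 * 2 ^ s * cnt B (W (j+1)) ≤ 4 * 2 ^ s * (W 0 + j + 2) := by
      calc 4 * 2 ^ s * cnt B (W (j+1)) ≤ W (j+1) := hcnt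
      _ ≤ W 0 + (j+1) * (2 ^ s + 1) := hbound
      _ ≤ 4 * 2 ^ s * (W 0 + j + 2) := by nlinarith
    have hle : cnt B (W (j+1)) ≤ W 0 + j + 2 :=
      Nat.le_of_mul_le_mul_left hmul (by positivity)
    have hW1 : W 1 = W 0 + (2 ^ φ (W 0) + 1) := Wseq_succ K₀ φ 0
    have h2W0 : 2 ≤ 2 ^ φ (W 0) := by
      calc 2 = 2 ^ 1 := by norm_num
      _ ≤ 2 ^ φ (W 0) := Nat.pow_le_pow_right (by norm_num) (hφW1 0)
    omega
  refine ⟨C, ?_, ?_⟩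
  · -- domination
    intro k
    by_cases hk : k ≤ W 1
    · have hsub : Set.Iio k ⊆ C ∩ Set.Iio k := by
        intro x hx
        refine ⟨Or.inl ?_, hx⟩
        exact lt_of_lt_of_le hx hk
      have : k ≤ cnt C k := by
        have := Set.ncard_le_ncard hsub (cnt_finite C k)
        rwa [ncard_Iio] at this
      exact le_trans (cnt_le B k) this
    · push_neg at hk
      set t := Nat.findGreatest (fun j => W j ≤ k) k with htdef
      have hW1k : W 1 ≤ k := le_of_lt hk
      have h1k : 1 ≤ k := le_trans (le_trans (by omega) (Wseq_le_apply K₀ φ 1)) hW1k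
      have ht1 : 1 ≤ t := Nat.le_findGreatest h1k hW1k
      have hWt : W t ≤ k := Nat.findGreatest_spec (P := fun j => W j ≤ k) (n := k) (m := 1) h1k hW1k
      have hkWt1 : k < W (t+1) := by
        by_cases hle : t + 1 ≤ k
        · have := Nat.findGreatest_is_greatest (P := fun j => W j ≤ k) (n := k)
            (by omega : Nat.findGreatest (fun j => W j ≤ k) k < t + 1) hle
          omega
        · exact lt_of_lt_of_le (by omega : k < t + 1) (Wseq_le_apply K₀ φ (t+1))
      have hsub : Set.Iio (W 1) ∪ (c '' Set.Ico 1 t) ⊆ C ∩ Set.Iio k := by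
        rintro x (hx | ⟨j, hj, rfl⟩)
        · exact ⟨Or.inl hx, lt_of_lt_of_le hx hW1k⟩
        · rw [Set.mem_Ico] at hj
          refine ⟨Or.inr ⟨j, rfl⟩, ?_⟩
          have : c j < W (j+1) := (hcW j).2
          have h2 : W (j+1) ≤ W t := hWmono.monotone (by omega)
          exact lt_of_lt_of_le (lt_of_lt_of_le this h2) hWt
      have hdisj : Disjoint (Set.Iio (W 1)) (c '' Set.Ico 1 t) := by
        rw [Set.disjoint_left]
        rintro x hx ⟨j, hj, rfl⟩
        rw [Set.mem_Ico] at hj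
        rw [Set.mem_Iio] at hx
        have : W 1 ≤ c j := le_trans (hWmono.monotone hj.1) (hcW j).1
        omega
      have hcard : (Set.Iio (W 1) ∪ c '' Set.Ico 1 t).ncard = W 1 + (t - 1) := by
        rw [Set.ncard_union_eq hdisj (Set.finite_Iio _)
          ((Set.finite_Ico 1 t).image c), ncard_Iio,
          Set.ncard_image_of_injOn (hcmono.injective.injOn),
          ← Finset.coe_Ico, Set.ncard_coe_finset, Nat.card_Ico]
      have hlow : W 1 + (t - 1) ≤ cnt C k := by
        rw [← hcard]
        exact Set.ncard_le_ncard hsub (cnt_finite C k)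
      have hup : cnt B k ≤ W 1 + (t - 1) :=
        le_trans (cnt_mono B (le_of_lt hkWt1)) (hstar t ht1)
      exact le_trans hup hlow
  · -- the ratio tends to zero
    have hsum_union : ∀ (s t : Finset ℕ), (∑ i ∈ s ∪ t, h i) ≤ (∑ i ∈ s, h i) + (∑ i ∈ t, h i) := by
      intro s t
      calc ∑ i ∈ s ∪ t, h i = ∑ i ∈ s ∪ (t \ s), h i := by
            rw [Finset.union_sdiff_self_eq_union]
      _ = (∑ i ∈ s, h i) + (∑ i ∈ t \ s, h i) := Finset.sum_union Finset.disjoint_sdiff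
      _ ≤ (∑ i ∈ s, h i) + (∑ i ∈ t, h i) :=
            add_le_add_right (Finset.sum_le_sum_of_subset_of_nonneg Finset.sdiff_subset
              (fun i _ _ => hpos i)) _
    have hwinsum : ∀ a b, a ≤ b →
        (∑ j ∈ Finset.Ico a b, ∑ i ∈ Finset.Ico (W j) (W (j+1)), h i)
          = ∑ i ∈ Finset.Ico (W a) (W b), h i := by
      intro a b hab
      induction b, hab using Nat.le_induction with
      | base => simp
      | succ b hab ih =>
        rw [Finset.sum_Ico_succ_top hab, ih,
          Finset.sum_Ico_consecutive _ (hWmono.monotone hab) (hWmono (lt_add_one b)).le]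
    rw [Metric.tendsto_atTop]
    intro ε hε
    obtain ⟨s, hs⟩ := pow_unbounded_of_one_lt (4 / ε) (one_lt_two (α := ℝ))
    have hsinv : 2 * ((2:ℝ)^s)⁻¹ < ε / 2 := by
      rw [div_lt_iff₀ hε] at hs
      have h2s : (0:ℝ) < 2^s := by positivity
      rw [lt_div_iff₀ (by norm_num : (0:ℝ) < 2), mul_comm 2 ((2:ℝ)^s)⁻¹, mul_assoc]
      rw [inv_mul_lt_iff₀ h2s]
      nlinarith
    set j₀ : ℕ := max 1 (A' s) with hj₀def
    have hφj₀ : ∀ j, j₀ ≤ j → s ≤ φ (W j) := by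
      intro j hj
      apply hφ_ge
      calc A' s ≤ j₀ := le_max_right _ _
      _ ≤ j := hj
      _ ≤ W j := Wseq_le_apply K₀ φ j
    have hEj₀ : ∀ i, W j₀ ≤ i → h i * 2 ^ s ≤ H (i + 1) := by
      intro i hi
      apply hE
      calc E s ≤ A' s := hA'E s
      _ ≤ j₀ := le_max_right _ _
      _ ≤ W j₀ := Wseq_le_apply K₀ φ j₀
      _ ≤ i := hi
    obtain ⟨N₁, hN₁⟩ := (tendsto_atTop.mp hH (max 1 (2 * H (W j₀) / ε))).exists_forall_of_atTop
    refine ⟨max N₁ (W (j₀ + 1)), fun k hk => ?_⟩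
    have hkN₁ : N₁ ≤ k := le_trans (le_max_left _ _) hk
    have hkW : W (j₀ + 1) ≤ k := le_trans (le_max_right _ _) hk
    have hHk1 : (1:ℝ) ≤ H k := le_trans (le_max_left _ _) (hN₁ k hkN₁)
    have hHk2 : 2 * H (W j₀) / ε ≤ H k := le_trans (le_max_right _ _) (hN₁ k hkN₁)
    have hHkpos : (0:ℝ) < H k := lt_of_lt_of_le one_pos hHk1
    -- locate k among the windows
    have hW1k : W 1 ≤ k := le_trans (hWmono.monotone (by omega : 1 ≤ j₀ + 1)) hkW
    have h1k : 1 ≤ k := le_trans (le_trans (by omega) (Wseq_le_apply K₀ φ 1)) hW1k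
    set t := Nat.findGreatest (fun j => W j ≤ k) k with htdef
    have hj₀k : j₀ ≤ k := le_trans (le_trans (Wseq_le_apply K₀ φ j₀)
      (hWmono (lt_add_one j₀)).le) hkW
    have hWj₀k : W j₀ ≤ k := le_trans (hWmono (lt_add_one j₀)).le hkW
    have htj₀ : j₀ ≤ t := Nat.le_findGreatest hj₀k hWj₀k
    have ht1 : 1 ≤ t := le_trans (by omega : 1 ≤ j₀) htj₀
    have hWt : W t ≤ k :=
      Nat.findGreatest_spec (P := fun j => W j ≤ k) (n := k) (m := j₀) hj₀k hWj₀k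
    have hkWt1 : k < W (t+1) := by
      by_cases hle : t + 1 ≤ k
      · have := Nat.findGreatest_is_greatest (P := fun j => W j ≤ k) (n := k)
          (by omega : Nat.findGreatest (fun j => W j ≤ k) k < t + 1) hle
        omega
      · exact lt_of_lt_of_le (by omega : k < t + 1) (Wseq_le_apply K₀ φ (t+1))
    -- the numerator
    set Num : ℝ := ∑ i ∈ Finset.range k, C.indicator h i with hNumdef
    have hNum_filter : Num = ∑ i ∈ (Finset.range k).filter (· ∈ C), h i := by
      rw [hNumdef]
      exact Finset.sum_indicator_eq_sum_filter (Finset.range k) (fun _ => h) (fun _ => C) id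
    have hNum_nonneg : 0 ≤ Num := Finset.sum_nonneg fun i _ => Set.indicator_nonneg
      (fun j _ => hpos j) i
    -- the covering finset
    set T : Finset ℕ := (Finset.range (W j₀) ∪ (Finset.Ico j₀ t).image c)
      ∪ (if c t < k then {c t} else ∅) with hTdef
    have hsubT : (Finset.range k).filter (· ∈ C) ⊆ T := by
      intro i hi
      rw [Finset.mem_filter, Finset.mem_range] at hi
      obtain ⟨hik, hiC⟩ := hi
      rw [hTdef]
      simp only [Finset.mem_union]
      rcases hiC with hi1 | ⟨j, rfl⟩
      · left; left
        rw [Finset.mem_range]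
        exact lt_of_lt_of_le hi1 (hWmono.monotone (by omega : 1 ≤ j₀))
      · -- i = c j
        rcases lt_or_ge (c j) (W j₀) with hlt | hge
        · left; left
          rwa [Finset.mem_range]
        · have hjj₀ : j₀ ≤ j := by
            by_contra hcon
            push_neg at hcon
            have : c j < W j₀ := lt_of_lt_of_le (hcW j).2 (hWmono.monotone (by omega))
            omega
          have hjt : j ≤ t := by
            have h1 : W j ≤ c j := (hcW j).1
            have h2 : W j < W (t+1) := by omega
            have := hWmono.lt_iff_lt.mp h2
            omega
          rcases lt_or_eq_of_le hjt with hjlt | rfl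
          · left; right
            rw [Finset.mem_image]
            exact ⟨j, Finset.mem_Ico.mpr ⟨hjj₀, hjlt⟩, rfl⟩
          · right
            rw [if_pos hik, Finset.mem_singleton]
    -- bound the numerator
    have hNumT : Num ≤ ∑ i ∈ T, h i := by
      rw [hNum_filter]
      exact Finset.sum_le_sum_of_subset_of_nonneg hsubT (fun i _ _ => hpos i)
    have hT_split : ∑ i ∈ T, h i ≤ H (W j₀) + (∑ j ∈ Finset.Ico j₀ t, h (c j))
        + (if c t < k then h (c t) else 0) := by
      rw [hTdef]
      calc ∑ i ∈ (Finset.range (W j₀) ∪ (Finset.Ico j₀ t).image c)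
            ∪ (if c t < k then {c t} else ∅), h i
          ≤ (∑ i ∈ Finset.range (W j₀) ∪ (Finset.Ico j₀ t).image c, h i)
            + (∑ i ∈ (if c t < k then ({c t} : Finset ℕ) else ∅), h i) := hsum_union _ _
      _ ≤ ((∑ i ∈ Finset.range (W j₀), h i) + (∑ i ∈ (Finset.Ico j₀ t).image c, h i))
            + (∑ i ∈ (if c t < k then ({c t} : Finset ℕ) else ∅), h i) := by
          exact add_le_add_left (hsum_union _ _) _
      _ = H (W j₀) + (∑ j ∈ Finset.Ico j₀ t, h (c j)) + (if c t < k then h (c t) else 0) := by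
          congr 1
          · congr 1
            exact Finset.sum_image (fun x _ y _ hxy => hcmono.injective hxy)
          · split_ifs <;> simp
    -- bound the middle sum
    have hmid : (∑ j ∈ Finset.Ico j₀ t, h (c j)) ≤ ((2:ℝ)^s)⁻¹ * H k := by
      have hperj : ∀ j ∈ Finset.Ico j₀ t,
          (2:ℝ)^s * h (c j) ≤ ∑ i ∈ Finset.Ico (W j) (W (j+1)), h i := by
        intro j hj
        rw [Finset.mem_Ico] at hj
        have hcard : (Finset.Ico (W j) (W (j+1))).card = 2 ^ φ (W j) + 1 := by
          have hws := Wseq_succ K₀ φ j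
          rw [← hWdef] at hws
          rw [Nat.card_Ico, hws, Nat.add_sub_cancel_left]
        have hnsmul := Finset.card_nsmul_le_sum (Finset.Ico (W j) (W (j+1))) h (h (c j))
          (fun i hi => hcmin j i hi)
        rw [hcard] at hnsmul
        have hcast : ((2 ^ φ (W j) + 1 : ℕ) : ℝ) * h (c j)
            ≤ ∑ i ∈ Finset.Ico (W j) (W (j+1)), h i := by
          rw [← nsmul_eq_mul]
          exact hnsmul
        have h2s : (2:ℝ)^s ≤ ((2 ^ φ (W j) + 1 : ℕ) : ℝ) := by
          have : (2:ℕ)^s ≤ 2 ^ φ (W j) := Nat.pow_le_pow_right (by norm_num) (hφj₀ j hj.1)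
          push_cast
          have h2 : ((2:ℕ)^s : ℝ) ≤ ((2 ^ φ (W j) : ℕ) : ℝ) := by exact_mod_cast this
          push_cast at h2
          linarith
        have hcnn : 0 ≤ h (c j) := hpos _
        nlinarith
      have hsumper : (2:ℝ)^s * (∑ j ∈ Finset.Ico j₀ t, h (c j))
          ≤ ∑ i ∈ Finset.Ico (W j₀) (W t), h i := by
        rw [Finset.mul_sum, ← hwinsum j₀ t htj₀]
        exact Finset.sum_le_sum hperj
      have hsub2 : (∑ i ∈ Finset.Ico (W j₀) (W t), h i) ≤ H k := by
        apply Finset.sum_le_sum_of_subset_of_nonneg _ (fun i _ _ => hpos i)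
        intro i hi
        rw [Finset.mem_Ico] at hi
        rw [Finset.mem_range]
        omega
      have h2spos : (0:ℝ) < 2^s := by positivity
      rw [inv_mul_eq_div, le_div_iff₀ h2spos]
      calc (∑ j ∈ Finset.Ico j₀ t, h (c j)) * 2^s
          = (2:ℝ)^s * (∑ j ∈ Finset.Ico j₀ t, h (c j)) := by ring
      _ ≤ ∑ i ∈ Finset.Ico (W j₀) (W t), h i := hsumper
      _ ≤ H k := hsub2
    -- bound the partial term
    have hpart : (if c t < k then h (c t) else 0) ≤ ((2:ℝ)^s)⁻¹ * H k := by
      split_ifs with hct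
      · have hWj₀ct : W j₀ ≤ c t := le_trans (hWmono.monotone htj₀) (hcW t).1
        have := hEj₀ (c t) hWj₀ct
        have hHle : H (c t + 1) ≤ H k := hHmono (by omega)
        have h2spos : (0:ℝ) < 2^s := by positivity
        rw [inv_mul_eq_div, le_div_iff₀ h2spos]
        calc h (c t) * 2^s ≤ H (c t + 1) := this
        _ ≤ H k := hHle
      · positivity
    -- put it together
    have htotal : Num ≤ H (W j₀) + 2 * ((2:ℝ)^s)⁻¹ * H k := by
      calc Num ≤ H (W j₀) + (∑ j ∈ Finset.Ico j₀ t, h (c j))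
          + (if c t < k then h (c t) else 0) := le_trans hNumT hT_split
      _ ≤ H (W j₀) + ((2:ℝ)^s)⁻¹ * H k + ((2:ℝ)^s)⁻¹ * H k := by
          exact add_le_add (add_le_add_right hmid _) hpart
      _ = H (W j₀) + 2 * ((2:ℝ)^s)⁻¹ * H k := by ring
    have hfirst : H (W j₀) ≤ ε / 2 * H k := by
      rw [div_le_iff₀ hε] at hHk2
      linarith
    have hfinal : Num / H k < ε := by
      rw [div_lt_iff₀ hHkpos]
      calc Num ≤ H (W j₀) + 2 * ((2:ℝ)^s)⁻¹ * H k := htotal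
      _ ≤ ε / 2 * H k + 2 * ((2:ℝ)^s)⁻¹ * H k := by linarith
      _ < ε / 2 * H k + ε / 2 * H k :=
          add_lt_add_right (mul_lt_mul_of_pos_right hsinv hHkpos) _
      _ = ε * H k := by ring
    rw [Real.dist_eq, sub_zero, abs_of_nonneg (div_nonneg hNum_nonneg (le_of_lt hHkpos))]
    exact hfinal

theorem stmt19 (f : ℝ → ℝ) (hf : IsModulus f) (hfu : IsUnboundedMod f)
    (I : Set (Set ℕ)) (hI : IsIdeal I) (hEU : IsEU I) (hinc : IncreasingInvariant I) :
    {C : Set ℕ | Tendsto (fun k => f (cnt C k) / f (k : ℝ)) atTop (nhds 0)} ⊆ I := by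
  intro B hB
  obtain ⟨h, hpos, hHt, hδ, hIeq⟩ := hEU
  have hdens := density_of_modulus hf B hB
  obtain ⟨C, hdom, hC⟩ := core h hpos hHt hδ B hdens
  have hCI : C ∈ I := by rw [hIeq]; exact hC
  exact hinc C hCI B hdom
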